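/- If z ∈ ℂ satisfies |z − πn| ≥ π/4 for every integer n ∈ ℤ, then |sin z| > (1/4)·e^{|Im z|}. -/

import Mathlib

set_option maxHeartbeats 1000000


/-- If `z ∈ ℂ` satisfies `|z - πn| ≥ π/4` for every integer `n`,
then `|sin z| > (1/4)·e^{|Im z|}`. -/
theorem stmt_6 (z : ℂ) (h : ∀ n : ℤ, Real.pi / 4 ≤ ‖z - (Real.pi : ℂ) * n‖) :
    (1 / 4 : ℝ) * Real.exp |z.im| < ‖Complex.sin z‖ := by
  set x := z.re with hx
  set y := z.im with hy
  have key : ‖Complex.sin z‖ ^ 2 = Real.sin x ^ 2 + Real.sinh y ^ 2 := by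
    rw [Complex.sq_norm, Complex.sin_eq]
    simp only [← Complex.ofReal_sin, ← Complex.ofReal_cos, ← Complex.ofReal_sinh,
      ← Complex.ofReal_cosh, Complex.normSq_apply, Complex.add_re, Complex.add_im,
      Complex.mul_re, Complex.mul_im, Complex.ofReal_re, Complex.ofReal_im,
      Complex.I_re, Complex.I_im]
    ring_nf
    nlinarith [Real.sin_sq_add_cos_sq x, Real.cosh_sq y]
  have hA : (0:ℝ) ≤ ‖Complex.sin z‖ := norm_nonneg _
  have hE : (0:ℝ) < Real.exp |y| := Real.exp_pos _
  refine lt_of_pow_lt_pow_left₀ 2 hA ?_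
  rw [key]
  have hE2 : Real.exp |y| ^ 2 = Real.exp (2 * |y|) := by
    rw [two_mul, Real.exp_add]; ring
  have hsinh : Real.sinh y ^ 2 = ((Real.exp |y| - Real.exp (-|y|)) / 2) ^ 2 := by
    rcases abs_choice y with h' | h'
    · rw [h', Real.sinh_eq]
    · rw [h', Real.sinh_eq]; ring_nf
  have hEF : Real.exp |y| * Real.exp (-|y|) = 1 := by
    rw [← Real.exp_add]; simp
  rcases le_or_gt (1/2 : ℝ) |y| with hyc | hyc
  · -- |Im z| ≥ 1/2 : use sinh bound
    have h1 : Real.exp 1 ≤ Real.exp (2 * |y|) := Real.exp_le_exp.2 (by linarith)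
    have h2 : (2.7182818283 : ℝ) < Real.exp 1 := Real.exp_one_gt_d9
    have hF : (0:ℝ) < Real.exp (-|y|) := Real.exp_pos _
    nlinarith [sq_nonneg (Real.sin x), sq_nonneg (Real.exp (-|y|))]
  · -- |Im z| < 1/2 : use sin bound
    have pi_gt : (3.141592 : ℝ) < Real.pi := Real.pi_gt_d6
    have pi_lt : Real.pi < 3.141593 := Real.pi_lt_d6
    set n : ℤ := round (x / Real.pi) with hn_def
    have hre : (z - (Real.pi : ℂ) * n).re = x - Real.pi * n := by simp [hx]
    have him : (z - (Real.pi : ℂ) * n).im = y := by simp [hy]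
    have habs2 : (Real.pi / 4) ^ 2 ≤ (x - Real.pi * n) ^ 2 + y ^ 2 := by
      have h2 := pow_le_pow_left₀ (by positivity) (h n) 2
      rw [Complex.sq_norm, Complex.normSq_apply, hre, him] at h2
      nlinarith [h2]
    have hpi0 : (0:ℝ) < Real.pi := by linarith
    set u : ℝ := x - n * Real.pi with hu_def
    have hround : |x / Real.pi - n| ≤ 1/2 := abs_sub_round (x / Real.pi)
    have hu_eq : u = Real.pi * (x / Real.pi - n) := by
      field_simp [hu_def]; ring
    have htle : |u| ≤ Real.pi / 2 := by
      rw [hu_eq, abs_mul, abs_of_pos hpi0]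
      calc Real.pi * |x / Real.pi - n| ≤ Real.pi * (1/2) := by
            exact mul_le_mul_of_nonneg_left hround hpi0.le
        _ = Real.pi / 2 := by ring
    have hy2 : y ^ 2 < 1/4 := by nlinarith [abs_nonneg y, sq_abs y]
    have ht2 : (9/25 : ℝ) < u ^ 2 := by
      have : (x - Real.pi * n) ^ 2 = u ^ 2 := by rw [hu_def]; ring
      nlinarith
    have ht : (3/5 : ℝ) < |u| := by
      by_contra hc
      push_neg at hc
      have h9 : |u| ^ 2 ≤ (3/5 : ℝ) ^ 2 := pow_le_pow_left₀ (abs_nonneg u) hc 2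
      rw [sq_abs] at h9
      linarith
    have hsin06 : (273/500 : ℝ) < Real.sin (3/5) := by
      have := Real.sin_gt_sub_cube (by norm_num : (0:ℝ) < 3/5)
      linarith
    have hsint : Real.sin (3/5) ≤ Real.sin |u| :=
      Real.sin_le_sin_of_le_of_le_pi_div_two (by linarith) htle ht.le
    have hsinu : Real.sin |u| = |Real.sin u| := by
      rcases le_or_gt 0 u with hu | hu
      · rw [abs_of_nonneg hu, abs_of_nonneg]
        apply Real.sin_nonneg_of_nonneg_of_le_pi hu
        rw [abs_of_nonneg hu] at htle; linarith
      · rw [abs_of_neg hu, Real.sin_neg, abs_of_nonpos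
          (Real.sin_nonpos_of_nonpos_of_neg_pi_le hu.le (by rw [abs_of_neg hu] at htle; linarith))]
    have hsinx : |Real.sin u| = |Real.sin x| := by
      have h1 : |((-1:ℝ)) ^ n| = 1 := by
        rcases Int.even_or_odd n with he | he
        · rw [Even.neg_one_zpow he, abs_one]
        · rw [Odd.neg_one_zpow he, abs_neg, abs_one]
      rw [hu_def, Real.sin_sub_int_mul_pi, abs_mul, h1, one_mul]
    have hsq : (273/500 : ℝ)^2 < Real.sin x ^ 2 := by
      have h1 : (273/500 : ℝ) < |Real.sin x| := by
        rw [← hsinx, ← hsinu]; linarith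
      nlinarith [abs_nonneg (Real.sin x), sq_abs (Real.sin x)]
    have hEe : Real.exp (2 * |y|) ≤ Real.exp 1 := Real.exp_le_exp.2 (by linarith)
    have he1 : Real.exp 1 < 2.7182818286 := Real.exp_one_lt_d9
    nlinarith [sq_nonneg (Real.sinh y)]
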